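/- Let w be a Jacobi weight with orthonormal polynomials p_j(w), Gauss nodes x_1,…,x_n (zeros of p_n(w)) and Christoffel numbers λ_k = (∑_{j=0}^{n−1} p_j(w,x_k)²)^{−1}. Define the fundamental VP polynomials Φ_{n,k}^m(x) = λ_k ∑_{j=0}^{n+m−1} μ_{n,j}^m p_j(w,x_k) p_j(w,x) and the VP operator V_n^m(w,f,x) = ∑_{k=1}^n f(x_k) Φ_{n,k}^m(x). Then V_n^m(w, P) = P for every polynomial P of degree at most n−m. -/

import Mathlib

open MeasureTheory Polynomial

/-- Invariance property of the filtered de la Vallée Poussin operator: with `w` a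
Jacobi weight, `p j` its orthonormal polynomials, Gauss nodes the zeros of `p n`,
Christoffel numbers `λ_k`, VP filter coefficients `μ_{n,j}^m` and fundamental VP
polynomials `Φ_{n,k}^m`, the operator `V_n^m(w,·)` reproduces every polynomial of
degree at most `n - m`. -/
theorem stmt7 (α β : ℝ) (hα : -1 < α) (hβ : -1 < β)
    (w : ℝ → ℝ)
    (hw : ∀ x ∈ Set.Ioo (-1 : ℝ) 1, w x = (1 - x) ^ α * (1 + x) ^ β)
    (p : ℕ → Polynomial ℝ)
    (hdeg : ∀ j, (p j).natDegree = j)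
    (hlead : ∀ j, 0 < (p j).leadingCoeff)
    (horth : ∀ i j : ℕ,
      (∫ x in Set.Ioo (-1 : ℝ) 1, (p i).eval x * (p j).eval x * w x) =
        if i = j then 1 else 0)
    (n m : ℕ) (hm : 0 < m) (hmn : m < n)
    (x : Fin n → ℝ) (hxinj : Function.Injective x)
    (hxmem : ∀ k, x k ∈ Set.Ioo (-1 : ℝ) 1)
    (hzero : ∀ k, (p n).eval (x k) = 0)
    (μ : ℕ → ℝ)
    (hμ : ∀ j : ℕ, μ j = if j ≤ n - m then 1 else ((n : ℝ) + (m : ℝ) - (j : ℝ)) / (2 * m))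
    (lam : Fin n → ℝ)
    (hlam : ∀ k, lam k = (∑ j ∈ Finset.range n, ((p j).eval (x k)) ^ 2)⁻¹)
    (Φ : Fin n → ℝ → ℝ)
    (hΦ : ∀ k t, Φ k t =
      lam k * ∑ j ∈ Finset.range (n + m), μ j * (p j).eval (x k) * (p j).eval t)
    (V : (ℝ → ℝ) → ℝ → ℝ)
    (hV : ∀ f t, V f t = ∑ k : Fin n, f (x k) * Φ k t) :
    ∀ P : Polynomial ℝ, P.natDegree ≤ n - m →
      ∀ t : ℝ, V (fun y => P.eval y) t = P.eval t := by
  intro P hP t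
  have hn : 0 < n := hm.trans hmn
  set S : Set ℝ := Set.Ioo (-1 : ℝ) 1 with hS
  -- measurability of w with respect to the restricted measure
  have hwae : w =ᵐ[volume.restrict S]
      fun y => (1 - y) ^ α * (1 + y) ^ β := by
    filter_upwards [ae_restrict_mem measurableSet_Ioo] with y hy
    exact hw y hy
  have hwmeas : AEStronglyMeasurable w (volume.restrict S) := by
    refine AEStronglyMeasurable.congr ?_ hwae.symm
    have hg : ContinuousOn (fun y : ℝ => (1 - y) ^ α * (1 + y) ^ β) S := by
      refine ContinuousOn.mul ?_ ?_
      · refine ContinuousOn.rpow_const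
          ((continuous_const.sub continuous_id).continuousOn) fun y hy => Or.inl ?_
        have := hy.2; intro h; simp only [sub_eq_zero] at h; linarith
      · refine ContinuousOn.rpow_const
          ((continuous_const.add continuous_id).continuousOn) fun y hy => Or.inl ?_
        have := hy.1; intro h
        have : (1:ℝ) + y = 0 := h
        linarith
    exact hg.aestronglyMeasurable measurableSet_Ioo
  have hwpos : ∀ᵐ y ∂(volume.restrict S), 0 ≤ w y := by
    filter_upwards [ae_restrict_mem measurableSet_Ioo] with y hy
    rw [hw y hy]
    have h1 : (0:ℝ) ≤ 1 - y := by have := hy.2; linarith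
    have h2 : (0:ℝ) ≤ 1 + y := by have := hy.1; linarith
    exact mul_nonneg (Real.rpow_nonneg h1 α) (Real.rpow_nonneg h2 β)
  -- the constant polynomial p 0
  obtain ⟨c0, hp0, hp0pos⟩ : ∃ c0 : ℝ, p 0 = C c0 ∧ 0 < c0 := by
    refine ⟨(p 0).coeff 0, Polynomial.eq_C_of_natDegree_eq_zero (hdeg 0), ?_⟩
    have := hlead 0
    rwa [Polynomial.leadingCoeff, hdeg 0] at this
  have hp0c : c0 ≠ 0 := ne_of_gt hp0pos
  -- integrability of w
  have hint00 : Integrable (fun y => (p 0).eval y * (p 0).eval y * w y)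
      (volume.restrict S) := by
    by_contra h
    have h0 := horth 0 0
    rw [integral_undef h] at h0
    simp at h0
  have hwint : Integrable w (volume.restrict S) := by
    have : w = fun y => (c0 * c0)⁻¹ *
        ((p 0).eval y * (p 0).eval y * w y) := by
      funext y
      rw [hp0]
      simp only [eval_C]
      field_simp
    rw [this]
    exact hint00.const_mul _
  -- integrability of polynomial times weight
  have hQint : ∀ Q : Polynomial ℝ,
      Integrable (fun y => Q.eval y * w y) (volume.restrict S) := by
    intro Q
    obtain ⟨Cb, hCb⟩ : ∃ Cb, ∀ y ∈ Set.Icc (-1:ℝ) 1, ‖Q.eval y‖ ≤ Cb :=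
      IsCompact.exists_bound_of_continuousOn isCompact_Icc
        (Q.continuous_aeval.continuousOn)
    refine Integrable.mono' (hwint.const_mul Cb) ?_ ?_
    · exact (Q.continuous_aeval.aestronglyMeasurable).mul hwmeas
    · filter_upwards [ae_restrict_mem measurableSet_Ioo, hwpos] with y hy hwy
      rw [norm_mul]
      have h1 : ‖Q.eval y‖ ≤ Cb := hCb y ⟨le_of_lt hy.1, le_of_lt hy.2⟩
      have h2 : ‖w y‖ = w y := abs_of_nonneg hwy
      rw [h2]
      exact mul_le_mul_of_nonneg_right h1 hwy
  -- the weighted integral functional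
  set I : Polynomial ℝ → ℝ := fun Q => ∫ y in S, Q.eval y * w y with hIdef
  have hIsum : ∀ {ι : Type} (s : Finset ι) (f : ι → Polynomial ℝ),
      I (∑ j ∈ s, f j) = ∑ j ∈ s, I (f j) := by
    intro ι s f
    simp only [hIdef, eval_finset_sum, Finset.sum_mul]
    exact integral_finset_sum s fun j _ => hQint (f j)
  have hIC : ∀ (a : ℝ) (Q : Polynomial ℝ), I (C a * Q) = a * I Q := by
    intro a Q
    simp only [hIdef, eval_mul, eval_C, mul_assoc]
    exact integral_const_mul a _
  have hIorth : ∀ i j : ℕ, I (p i * p j) = if i = j then 1 else 0 := by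
    intro i j
    simp only [hIdef, eval_mul]
    exact horth i j
  -- expansion lemma
  have hspan : ∀ (d : ℕ) (Q : Polynomial ℝ), Q.natDegree ≤ d →
      ∃ c : ℕ → ℝ, Q = ∑ j ∈ Finset.range (d+1), C (c j) * p j := by
    intro d
    induction d with
    | zero =>
      intro Q hQ
      refine ⟨fun _ => Q.coeff 0 / c0, ?_⟩
      rw [Finset.sum_range_one, hp0, ← C_mul, div_mul_cancel₀ _ hp0c]
      exact Polynomial.eq_C_of_natDegree_eq_zero (Nat.le_zero.mp hQ)
    | succ d ih =>
      intro Q hQ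
      have hcn : (p (d+1)).coeff (d+1) ≠ 0 := by
        have := hlead (d+1)
        rw [Polynomial.leadingCoeff, hdeg (d+1)] at this
        exact ne_of_gt this
      set a := Q.coeff (d+1) / (p (d+1)).coeff (d+1) with ha
      set Q' := Q - C a * p (d+1) with hQ'def
      have hQ'deg : Q'.natDegree ≤ d := by
        rw [Polynomial.natDegree_le_iff_coeff_eq_zero]
        intro e he
        rw [hQ'def, Polynomial.coeff_sub, Polynomial.coeff_C_mul]
        rcases eq_or_lt_of_le (Nat.succ_le_of_lt he) with h | h
        · rw [← h, ha, div_mul_cancel₀ _ hcn, sub_self]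
        · rw [Polynomial.coeff_eq_zero_of_natDegree_lt (lt_of_le_of_lt hQ h),
            Polynomial.coeff_eq_zero_of_natDegree_lt (by rw [hdeg]; exact h),
            mul_zero, sub_zero]
      obtain ⟨c, hc⟩ := ih Q' hQ'deg
      refine ⟨Function.update c (d+1) a, ?_⟩
      rw [Finset.sum_range_succ, Function.update_self]
      have hsum : ∑ j ∈ Finset.range (d+1), C (Function.update c (d+1) a j) * p j
          = ∑ j ∈ Finset.range (d+1), C (c j) * p j := by
        refine Finset.sum_congr rfl fun j hj => ?_
        have hj' := Finset.mem_range.mp hj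
        rw [Function.update_of_ne (by omega : j ≠ d+1)]
      rw [hsum, ← hc, hQ'def]
      ring
  -- coefficient formula
  have hcoeff : ∀ (N : ℕ) (c : ℕ → ℝ) (i : ℕ),
      I ((∑ j ∈ Finset.range N, C (c j) * p j) * p i)
        = if i ∈ Finset.range N then c i else 0 := by
    intro N c i
    rw [Finset.sum_mul, hIsum]
    have hterm : ∀ j, I (C (c j) * p j * p i) = if j = i then c j else 0 := by
      intro j
      rw [mul_assoc, hIC, hIorth]
      simp [mul_ite]
    simp only [hterm]
    rw [Finset.sum_ite_eq' (Finset.range N) i c]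
  -- Lagrange basis and quadrature weights
  have hInjOn : Set.InjOn x ↑(Finset.univ : Finset (Fin n)) :=
    fun a _ b _ h => hxinj h
  have hcard : (Finset.univ : Finset (Fin n)).card = n := by simp
  set L : Fin n → Polynomial ℝ := fun k => Lagrange.basis Finset.univ x k with hL
  set W : Fin n → ℝ := fun k => I (L k) with hWdef
  have hLdeg : ∀ k, (L k).degree = ((n - 1 : ℕ) : WithBot ℕ) := by
    intro k
    rw [hL, Lagrange.degree_basis hInjOn (Finset.mem_univ k), hcard]
  have hLnatdeg : ∀ k, (L k).natDegree ≤ n - 1 := by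
    intro k
    exact Polynomial.natDegree_le_iff_degree_le.mpr (le_of_eq (hLdeg k))
  have hLself : ∀ k, (L k).eval (x k) = 1 := fun k =>
    Lagrange.eval_basis_self hInjOn (Finset.mem_univ k)
  have hLne : ∀ k i : Fin n, k ≠ i → (L k).eval (x i) = 0 := fun k i hki =>
    Lagrange.eval_basis_of_ne hki (Finset.mem_univ i)
  -- quadrature exact on degree < n
  have hquadlow : ∀ r : Polynomial ℝ, r.degree < (n : WithBot ℕ) →
      I r = ∑ k : Fin n, r.eval (x k) * W k := by
    intro r hr
    have hrint := Lagrange.eq_interpolate hInjOn (by rw [hcard]; exact hr)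
    conv_lhs => rw [hrint]
    rw [Lagrange.interpolate_apply, hIsum]
    refine Finset.sum_congr rfl fun k _ => ?_
    rw [hIC]
  -- quadrature exact on degree ≤ 2n-1
  have hquad : ∀ Q : Polynomial ℝ, Q.natDegree ≤ 2*n - 1 →
      I Q = ∑ k : Fin n, Q.eval (x k) * W k := by
    intro Q hQ
    have hpn0 : p n ≠ 0 := Polynomial.leadingCoeff_ne_zero.mp (ne_of_gt (hlead n))
    set Pm := p n * C (p n).leadingCoeff⁻¹ with hPm
    have hmonic : Pm.Monic := Polynomial.monic_mul_leadingCoeff_inv hpn0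
    have hPmdeg : Pm.natDegree = n := by
      rw [hPm, Polynomial.natDegree_mul_C
        (inv_ne_zero (ne_of_gt (hlead n))), hdeg]
    have hPmdeg' : Pm.degree = (n : WithBot ℕ) := by
      rw [Polynomial.degree_eq_natDegree (hmonic.ne_zero), hPmdeg]
    set r := Q %ₘ Pm with hr
    set q := Q /ₘ Pm with hq
    have hQeq : Q = r + Pm * q := (Polynomial.modByMonic_add_div Q Pm).symm
    have hrdeg : r.degree < (n : WithBot ℕ) := by
      rw [← hPmdeg']
      exact Polynomial.degree_modByMonic_lt Q hmonic
    have hqdeg : q.natDegree ≤ n - 1 := by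
      rw [hq, Polynomial.natDegree_divByMonic Q hmonic, hPmdeg]
      omega
    have hIPmq : I (Pm * q) = 0 := by
      have : Pm * q = (C (p n).leadingCoeff⁻¹ * q) * p n := by rw [hPm]; ring
      rw [this]
      have hcq : (C (p n).leadingCoeff⁻¹ * q).natDegree ≤ n - 1 :=
        le_trans (Polynomial.natDegree_C_mul_le _ _) hqdeg
      obtain ⟨c, hc⟩ := hspan (n-1) _ hcq
      have hn1 : n - 1 + 1 = n := by omega
      rw [hc, hn1, hcoeff n c n]
      simp
    have heval : ∀ k, Q.eval (x k) = r.eval (x k) := by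
      intro k
      conv_lhs => rw [hQeq]
      simp [hPm, hzero k]
    have hadd : I (r + Pm * q) = I r + I (Pm * q) := by
      simp only [hIdef, eval_add, add_mul]
      exact integral_add (hQint r) (hQint (Pm * q))
    conv_lhs => rw [hQeq]
    rw [hadd, hIPmq, add_zero, hquadlow r hrdeg]
    exact Finset.sum_congr rfl fun k _ => by rw [heval k]
  -- the reproducing kernel at node k
  set Kp : Fin n → Polynomial ℝ :=
    fun k => ∑ j ∈ Finset.range n, C ((p j).eval (x k)) * p j with hKp
  have hKdeg : ∀ k, (Kp k).natDegree ≤ n - 1 := by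
    intro k
    refine Polynomial.natDegree_sum_le_of_forall_le _ _ fun j hj => ?_
    refine le_trans (Polynomial.natDegree_C_mul_le _ _) ?_
    rw [hdeg]
    exact Nat.le_sub_one_of_lt (Finset.mem_range.mp hj)
  have hrepro : ∀ (k : Fin n) (Q : Polynomial ℝ), Q.natDegree ≤ n - 1 →
      I (Q * Kp k) = Q.eval (x k) := by
    intro k Q hQ
    obtain ⟨c, hc⟩ := hspan (n-1) Q hQ
    have hn1 : n - 1 + 1 = n := by omega
    rw [hn1] at hc
    have hexp : Q * Kp k = ∑ j ∈ Finset.range n,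
        C ((p j).eval (x k)) * (Q * p j) := by
      rw [hKp, Finset.mul_sum]
      exact Finset.sum_congr rfl fun j _ => by ring
    rw [hexp, hIsum]
    have hterm : ∀ j ∈ Finset.range n,
        I (C ((p j).eval (x k)) * (Q * p j)) = (p j).eval (x k) * c j := by
      intro j hj
      rw [hIC, hc, hcoeff n c j, if_pos hj]
    rw [Finset.sum_congr rfl hterm]
    conv_rhs => rw [hc]
    simp only [eval_finset_sum, eval_mul, eval_C]
    exact Finset.sum_congr rfl fun j _ => by ring
  -- the Christoffel sums are positive
  have hSpos : ∀ k, 0 < ∑ j ∈ Finset.range n, ((p j).eval (x k)) ^ 2 := by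
    intro k
    refine Finset.sum_pos' (fun j _ => sq_nonneg _) ⟨0, Finset.mem_range.mpr hn, ?_⟩
    have : (p 0).eval (x k) = c0 := by rw [hp0]; simp
    rw [this]
    exact pow_pos hp0pos 2
  -- quadrature weights equal Christoffel numbers
  have hW : ∀ k, W k = lam k := by
    intro k
    have hKval : (Kp k).eval (x k) = ∑ j ∈ Finset.range n, ((p j).eval (x k)) ^ 2 := by
      rw [hKp]
      simp only [eval_finset_sum, eval_mul, eval_C, sq]
    have hQdeg : (L k * Kp k).natDegree ≤ 2*n - 1 := by
      refine le_trans (Polynomial.natDegree_mul_le) ?_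
      have := hLnatdeg k
      have := hKdeg k
      omega
    have h1 : I (L k * Kp k) = ∑ i : Fin n, (L k * Kp k).eval (x i) * W i :=
      hquad _ hQdeg
    have h2 : I (L k * Kp k) = (L k).eval (x k) := hrepro k (L k) (hLnatdeg k)
    have h3 : ∑ i : Fin n, (L k * Kp k).eval (x i) * W i
        = (Kp k).eval (x k) * W k := by
      rw [Finset.sum_eq_single k]
      · rw [eval_mul, hLself k, one_mul]
      · intro i _ hik
        rw [eval_mul, hLne k i (Ne.symm hik), zero_mul, zero_mul]
      · intro h; exact absurd (Finset.mem_univ k) h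
    have h4 : (Kp k).eval (x k) * W k = 1 := by
      rw [← h3, ← h1, h2, hLself k]
    rw [hlam k, ← hKval]
    have hne : (Kp k).eval (x k) ≠ 0 := by
      rw [hKval]; exact ne_of_gt (hSpos k)
    field_simp
    linarith [h4]
  -- expansion of P
  obtain ⟨c, hc⟩ := hspan (n-m) P hP
  -- main computation
  have hA : ∀ j ∈ Finset.range (n+m),
      ∑ k : Fin n, (P * p j).eval (x k) * W k
        = if j ∈ Finset.range (n-m+1) then c j else 0 := by
    intro j hj
    have hdj : (P * p j).natDegree ≤ 2*n - 1 := by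
      refine le_trans (Polynomial.natDegree_mul_le) ?_
      rw [hdeg]
      have h1 := Finset.mem_range.mp hj
      have h2 := hP
      omega
    rw [← hquad (P * p j) hdj, hc, hcoeff (n-m+1) c j]
  calc V (fun y => P.eval y) t
      = ∑ k : Fin n, ∑ j ∈ Finset.range (n+m),
          (μ j * (p j).eval t) * ((P * p j).eval (x k) * W k) := by
        rw [hV]
        refine Finset.sum_congr rfl fun k _ => ?_
        rw [hΦ, ← hW k]
        simp only [Finset.mul_sum, eval_mul]
        exact Finset.sum_congr rfl fun j _ => by ring
    _ = ∑ j ∈ Finset.range (n+m),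
          (μ j * (p j).eval t) * ∑ k : Fin n, (P * p j).eval (x k) * W k := by
        rw [Finset.sum_comm]
        exact Finset.sum_congr rfl fun j _ => by rw [Finset.mul_sum]
    _ = ∑ j ∈ Finset.range (n+m),
          (μ j * (p j).eval t) * (if j ∈ Finset.range (n-m+1) then c j else 0) := by
        exact Finset.sum_congr rfl fun j hj => by rw [hA j hj]
    _ = ∑ j ∈ Finset.range (n-m+1), (μ j * (p j).eval t) * c j := by
        rw [← Finset.sum_subset (Finset.range_subset_range.mpr (by omega : n-m+1 ≤ n+m))
          (fun j _ hj => by rw [if_neg hj, mul_zero])]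
        exact Finset.sum_congr rfl fun j hj => by rw [if_pos hj]
    _ = P.eval t := by
        conv_rhs => rw [hc]
        simp only [eval_finset_sum, eval_mul, eval_C]
        refine Finset.sum_congr rfl fun j hj => ?_
        have hj' := Finset.mem_range.mp hj
        rw [hμ j, if_pos (by omega : j ≤ n - m)]
        ring
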